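/- Let h be a complex-valued harmonic function on A(1,R), let U(ρ) = ⨍_{C_ρ} |h|², and fix λ ∈ (−1, 1]. Then for every ρ ∈ (1,R) the following two identities hold: (a) L^λ[U](ρ) = 2 ⨍_{C_ρ} [ ‖Dh‖² − (1/ρ) d/dρ( ((ρ²−λ)/(ρ²+λ)) |h|² ) ]; (b) L^λ[U](ρ) = (2/ρ²) ⨍_{C_ρ} [ |h_θ|² − |h|² + (ρ²+λ)² | d/dρ( ρ h /(ρ²+λ) ) |² ], where h_θ denotes the angular derivative of h. -/

import Mathlib

open MeasureTheory Filter Set Topology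
open scoped ENNReal

noncomputable section

/-- The round annulus `A(r,R) = {z : r < |z| < R}`. -/
def ann (r R : ℝ) : Set ℂ := {z : ℂ | r < ‖z‖ ∧ ‖z‖ < R}

/-- The Laplacian of `h : ℂ → ℂ`, viewed as a function of two real variables. -/
def lap (h : ℂ → ℂ) (z : ℂ) : ℂ :=
  fderiv ℝ (fun w => fderiv ℝ h w 1) z 1 +
    fderiv ℝ (fun w => fderiv ℝ h w Complex.I) z Complex.I

/-- A complex-valued harmonic function on a set (real and imaginary parts harmonic). -/
def HarmOn (h : ℂ → ℂ) (s : Set ℂ) : Prop :=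
  ContDiffOn ℝ 2 h s ∧ ∀ z ∈ s, lap h z = 0

/-- Cauchy–Riemann derivative `h_z`. -/
def dz (h : ℂ → ℂ) (z : ℂ) : ℂ :=
  (fderiv ℝ h z 1 - Complex.I * fderiv ℝ h z Complex.I) / 2

/-- Cauchy–Riemann derivative `h_z̄`. -/
def dzbar (h : ℂ → ℂ) (z : ℂ) : ℂ :=
  (fderiv ℝ h z 1 + Complex.I * fderiv ℝ h z Complex.I) / 2

/-- Jacobian determinant `J(z,h) = |h_z|² − |h_z̄|²`. -/
def jac (h : ℂ → ℂ) (z : ℂ) : ℝ := ‖dz h z‖ ^ 2 - ‖dzbar h z‖ ^ 2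

/-- Squared Hilbert–Schmidt norm `‖Dh‖² = 2(|h_z|² + |h_z̄|²) = |h_x|² + |h_y|²`. -/
def Dn2 (h : ℂ → ℂ) (z : ℂ) : ℝ :=
  ‖fderiv ℝ h z 1‖ ^ 2 + ‖fderiv ℝ h z Complex.I‖ ^ 2

/-- Cluster set of `h` at the inner circle of the annulus `A(r,R)`. -/
def clusterInner (h : ℂ → ℂ) (r R : ℝ) : Set ℂ :=
  ⋂ ρ ∈ Set.Ioo r R, closure (h '' ann r ρ)

/-- `h` is an orientation-preserving harmonic homeomorphism of `A(r,R)` onto `T`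
whose cluster set at the inner circle of `A(r,R)` is `ibdry` (the inner boundary of `T`). -/
def IsHarmHomeo (h : ℂ → ℂ) (r R : ℝ) (T : Set ℂ) (ibdry : Set ℂ) : Prop :=
  HarmOn h (ann r R) ∧ (∀ z ∈ ann r R, 0 < jac h z) ∧
    Set.BijOn h (ann r R) T ∧ clusterInner h r R = ibdry

/-- Circular mean `⨍_{C_ρ} f`. -/
def cAvg (f : ℂ → ℂ) (ρ : ℝ) : ℂ :=
  (2 * Real.pi)⁻¹ • ∫ θ in (0:ℝ)..(2 * Real.pi), f ((ρ : ℂ) * Complex.exp ((θ : ℂ) * Complex.I))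

/-- Quadratic mean `U(ρ) = ⨍_{C_ρ} |h|²`. -/
def qMean (h : ℂ → ℂ) (ρ : ℝ) : ℝ :=
  (2 * Real.pi)⁻¹ * ∫ θ in (0:ℝ)..(2 * Real.pi),
    ‖h ((ρ : ℂ) * Complex.exp ((θ : ℂ) * Complex.I))‖ ^ 2

/-- Variance `V(ρ) = ⨍_{C_ρ}|h|² − |⨍_{C_ρ} h|²`. -/
def vVar (h : ℂ → ℂ) (ρ : ℝ) : ℝ := qMean h ρ - ‖cAvg h ρ‖ ^ 2

/-- Circular mean of the radial (normal) derivative, `⨍_{C_ρ} ∂h/∂ρ`. -/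
def rAvg (h : ℂ → ℂ) (ρ : ℝ) : ℂ :=
  (2 * Real.pi)⁻¹ • ∫ θ in (0:ℝ)..(2 * Real.pi),
    fderiv ℝ h ((ρ : ℂ) * Complex.exp ((θ : ℂ) * Complex.I)) (Complex.exp ((θ : ℂ) * Complex.I))

/-- Mean outer radius `R_*(h) = lim_{ρ↗R} (⨍_{C_ρ}|h|²)^{1/2}`, as a value in `[0,∞]`
(the limit exists since the quadratic means are increasing; we use the `limsup`). -/
def Rstar (h : ℂ → ℂ) (R : ℝ) : ℝ≥0∞ :=
  Filter.limsup (fun ρ => ENNReal.ofReal (Real.sqrt (qMean h ρ))) (𝓝[<] R)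

/-- The ordinary differential operator `L^λ`. -/
def Lop (l : ℝ) (F : ℝ → ℝ) (ρ : ℝ) : ℝ :=
  deriv (deriv F) ρ + ((3 * l - ρ ^ 2) / (ρ * (ρ ^ 2 + l))) * deriv F ρ
    - (8 * l / (ρ ^ 2 + l) ^ 2) * F ρ

/-- The extremal mapping `h^λ(z) = (1/(1+λ))(z + λ/z̄)`. -/
def hext (l : ℝ) (z : ℂ) : ℂ := (1 / (1 + (l : ℂ))) * (z + (l : ℂ) / (starRingEnd ℂ z))

/-- `A` is a doubly connected domain whose inner boundary is the unit circle:
its complement is the disjoint union of the closed unit disk and an unbounded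
closed connected set. -/
def DCUnit (A : Set ℂ) : Prop :=
  IsOpen A ∧ IsConnected A ∧
    ∃ G : Set ℂ, IsClosed G ∧ IsConnected G ∧ ¬ Bornology.IsBounded G ∧
      Disjoint (Metric.closedBall (0 : ℂ) 1) G ∧ Aᶜ = Metric.closedBall (0 : ℂ) 1 ∪ G

/-- Circular mean `⨍_{C_ρ} Im(h̄ · h_θ)` where `h_θ` is the angular derivative. -/
def angMean (h : ℂ → ℂ) (ρ : ℝ) : ℝ :=
  (2 * Real.pi)⁻¹ * ∫ θ in (0:ℝ)..(2 * Real.pi),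
    (starRingEnd ℂ (h ((ρ : ℂ) * Complex.exp ((θ : ℂ) * Complex.I))) *
      fderiv ℝ h ((ρ : ℂ) * Complex.exp ((θ : ℂ) * Complex.I))
        (Complex.I * ((ρ : ℂ) * Complex.exp ((θ : ℂ) * Complex.I)))).im



namespace S9

/-- real inner product on ℂ -/
def B (a b : ℂ) : ℝ := (starRingEnd ℂ a * b).re

lemma B_eq (a b : ℂ) : B a b = a.re * b.re + a.im * b.im := by
  simp [B, Complex.mul_re]

lemma B_comm (a b : ℂ) : B a b = B b a := by simp [B_eq]; ring

lemma normSq_eq_B (a : ℂ) : Complex.normSq a = B a a := by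
  simp [B_eq, Complex.normSq_apply]

lemma B_add_right (a x y : ℂ) : B a (x + y) = B a x + B a y := by simp [B_eq]; ring
lemma B_smul_right (a : ℂ) (r : ℝ) (x : ℂ) : B a (r • x) = r * B a x := by
  simp [B_eq, Complex.smul_re, Complex.smul_im]; ring
lemma B_neg_right (a x : ℂ) : B a (-x) = - B a x := by
  simp [B_eq]; ring
lemma B_smul_left (r : ℝ) (x y : ℂ) : B (r • x) y = r * B x y := by
  simp [B_eq, Complex.smul_re, Complex.smul_im]; ring

lemma B_smul_both (r : ℝ) (x y : ℂ) : B (r • x) (r • y) = r^2 * B x y := by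
  simp [B_eq, Complex.smul_re, Complex.smul_im]; ring

lemma hasDerivAt_re {f : ℝ → ℂ} {f' : ℂ} {x : ℝ} (hf : HasDerivAt f f' x) :
    HasDerivAt (fun t => (f t).re) f'.re x :=
  Complex.reCLM.hasFDerivAt.comp_hasDerivAt x hf

lemma hasDerivAt_im {f : ℝ → ℂ} {f' : ℂ} {x : ℝ} (hf : HasDerivAt f f' x) :
    HasDerivAt (fun t => (f t).im) f'.im x :=
  Complex.imCLM.hasFDerivAt.comp_hasDerivAt x hf

lemma hasDerivAt_B {f g : ℝ → ℂ} {f' g' : ℂ} {x : ℝ}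
    (hf : HasDerivAt f f' x) (hg : HasDerivAt g g' x) :
    HasDerivAt (fun t => B (f t) (g t)) (B f' (g x) + B (f x) g') x := by
  have h1 := ((hasDerivAt_re hf).mul (hasDerivAt_re hg)).add
    ((hasDerivAt_im hf).mul (hasDerivAt_im hg))
  have e : (fun t => B (f t) (g t)) = fun t => (f t).re * (g t).re + (f t).im * (g t).im := by
    funext t; rw [B_eq]
  have e2 : B f' (g x) + B (f x) g' = f'.re * (g x).re + (f x).re * g'.re + (f'.im * (g x).im + (f x).im * g'.im) := by
    rw [B_eq, B_eq]; ring
  rw [e, e2]; exact h1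

lemma normSq_combo (a b : ℝ) (w v : ℂ) :
    Complex.normSq ((a:ℂ) * w + (b:ℂ) * v) =
      a ^ 2 * Complex.normSq w + 2 * a * b * B w v + b ^ 2 * Complex.normSq v := by
  simp [Complex.normSq_apply, B_eq, Complex.add_re, Complex.add_im, Complex.mul_re,
    Complex.mul_im]
  ring

/-- rotation invariance of the HS norm -/
lemma rot (L : ℂ →L[ℝ] ℂ) (θ : ℝ) :
    Complex.normSq (L (Complex.exp ((θ:ℂ) * Complex.I))) +
      Complex.normSq (L (Complex.I * Complex.exp ((θ:ℂ) * Complex.I))) =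
    Complex.normSq (L 1) + Complex.normSq (L Complex.I) := by
  have hE : Complex.exp ((θ:ℂ) * Complex.I)
      = (Real.cos θ : ℝ) • (1:ℂ) + (Real.sin θ : ℝ) • Complex.I := by
    rw [Complex.exp_mul_I]
    simp [Complex.real_smul, Complex.ofReal_cos, Complex.ofReal_sin]
  have hIE : Complex.I * Complex.exp ((θ:ℂ) * Complex.I)
      = (-Real.sin θ : ℝ) • (1:ℂ) + (Real.cos θ : ℝ) • Complex.I := by
    rw [hE]
    simp only [Complex.real_smul, Complex.ofReal_neg, smul_eq_mul, mul_one]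
    ring_nf
    rw [Complex.I_sq]
    ring
  rw [hIE, hE, L.map_add, L.map_add, L.map_smul, L.map_smul, L.map_smul, L.map_smul]
  set a := L 1
  set b := L Complex.I
  simp only [Complex.normSq_apply, Complex.add_re, Complex.add_im,
    Complex.real_smul, Complex.mul_re, Complex.mul_im, Complex.ofReal_re, Complex.ofReal_im]
  nlinarith [Real.sin_sq_add_cos_sq θ]

lemma rot2 (M : ℂ →L[ℝ] (ℂ →L[ℝ] ℂ)) (θ : ℝ) :
    M (Complex.exp ((θ:ℂ) * Complex.I)) (Complex.exp ((θ:ℂ) * Complex.I)) +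
      M (Complex.I * Complex.exp ((θ:ℂ) * Complex.I))
        (Complex.I * Complex.exp ((θ:ℂ) * Complex.I)) =
    M 1 1 + M Complex.I Complex.I := by
  have hE : Complex.exp ((θ:ℂ) * Complex.I)
      = (Real.cos θ : ℝ) • (1:ℂ) + (Real.sin θ : ℝ) • Complex.I := by
    rw [Complex.exp_mul_I]
    simp [Complex.real_smul, Complex.ofReal_cos, Complex.ofReal_sin]
  have hIE : Complex.I * Complex.exp ((θ:ℂ) * Complex.I)
      = (-Real.sin θ : ℝ) • (1:ℂ) + (Real.cos θ : ℝ) • Complex.I := by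
    rw [hE]
    simp only [Complex.real_smul, Complex.ofReal_neg, smul_eq_mul, mul_one]
    ring_nf
    rw [Complex.I_sq]
    ring
  rw [hIE, hE]
  rw [M.map_add, M.map_smul, M.map_smul, M.map_add, M.map_smul, M.map_smul]
  simp only [ContinuousLinearMap.add_apply, ContinuousLinearMap.smul_apply,
    ContinuousLinearMap.map_add, ContinuousLinearMap.map_smul]
  have hcs : ((Real.cos θ : ℂ))^2 + ((Real.sin θ : ℂ))^2 = 1 := by
    have := Real.sin_sq_add_cos_sq θ
    exact_mod_cast by push_cast [← this]; ring
  simp only [Complex.real_smul, smul_eq_mul, Complex.ofReal_neg]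
  ring_nf
  linear_combination (M 1 1 + M Complex.I Complex.I) * hcs

lemma hasDerivAt_line (E : ℂ) (t : ℝ) :
    HasDerivAt (fun s : ℝ => (s:ℂ) * E) E t := by
  have := (hasDerivAt_id t).smul_const E
  simpa [Complex.real_smul] using this

variable {h : ℂ → ℂ} {z : ℂ}

lemma hfd (hh : ContDiffAt ℝ 2 h z) : HasFDerivAt h (fderiv ℝ h z) z :=
  (hh.differentiableAt (by norm_num)).hasFDerivAt

lemma hfd2 (hh : ContDiffAt ℝ 2 h z) :
    HasFDerivAt (fderiv ℝ h) (fderiv ℝ (fderiv ℝ h) z) z :=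
  ((hh.fderiv_right (m := 1) (by norm_num)).differentiableAt (by norm_num)).hasFDerivAt

lemma lap_eq_f2 (hh : ContDiffAt ℝ 2 h z) :
    lap h z = fderiv ℝ (fderiv ℝ h) z 1 1 +
      fderiv ℝ (fderiv ℝ h) z Complex.I Complex.I := by
  have key : ∀ v : ℂ, fderiv ℝ (fun w => fderiv ℝ h w v) z
      = (ContinuousLinearMap.apply ℝ ℂ v).comp (fderiv ℝ (fderiv ℝ h) z) := by
    intro v
    exact ((ContinuousLinearMap.apply ℝ ℂ v).hasFDerivAt.comp z (hfd2 hh)).fderiv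
  rw [lap, key, key]
  rfl

lemma radial1 {t : ℝ} {E : ℂ} (hh : ContDiffAt ℝ 2 h ((t:ℂ)*E)) :
    HasDerivAt (fun s : ℝ => h ((s:ℂ)*E)) (fderiv ℝ h ((t:ℂ)*E) E) t :=
  (hfd hh).comp_hasDerivAt t (hasDerivAt_line E t)

lemma radial2 {t : ℝ} {E : ℂ} (hh : ContDiffAt ℝ 2 h ((t:ℂ)*E)) :
    HasDerivAt (fun s : ℝ => fderiv ℝ h ((s:ℂ)*E) E)
      (fderiv ℝ (fderiv ℝ h) ((t:ℂ)*E) E E) t := by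
  have hc : HasDerivAt (fun s : ℝ => fderiv ℝ h ((s:ℂ)*E))
      (fderiv ℝ (fderiv ℝ h) ((t:ℂ)*E) E) t :=
    (hfd2 hh).comp_hasDerivAt t (hasDerivAt_line E t)
  have := hc.clm_apply (hasDerivAt_const t E)
  simpa using this

lemma circle0 (ρ θ : ℝ) :
    HasDerivAt (fun θ : ℝ => (ρ:ℂ) * Complex.exp ((θ:ℂ) * Complex.I))
      (Complex.I * ((ρ:ℂ) * Complex.exp ((θ:ℂ) * Complex.I))) θ := by
  have h1 : HasDerivAt (fun θ : ℝ => ((θ:ℂ) * Complex.I)) Complex.I θ := by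
    have := (hasDerivAt_id θ).smul_const Complex.I
    simpa [Complex.real_smul] using this
  have h3 := h1.cexp.const_mul (ρ:ℂ)
  have e : Complex.I * ((ρ:ℂ) * Complex.exp ((θ:ℂ) * Complex.I)) = (ρ:ℂ) * (Complex.exp ((θ:ℂ) * Complex.I) * Complex.I) := by ring
  rw [e]; exact h3

lemma ang1 {ρ θ : ℝ} (hh : ContDiffAt ℝ 2 h ((ρ:ℂ) * Complex.exp ((θ:ℂ) * Complex.I))) :
    HasDerivAt (fun θ : ℝ => h ((ρ:ℂ) * Complex.exp ((θ:ℂ) * Complex.I)))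
      (fderiv ℝ h ((ρ:ℂ) * Complex.exp ((θ:ℂ) * Complex.I))
        (Complex.I * ((ρ:ℂ) * Complex.exp ((θ:ℂ) * Complex.I)))) θ :=
  (hfd hh).comp_hasDerivAt θ (circle0 ρ θ)

lemma ang2 {ρ θ : ℝ} (hh : ContDiffAt ℝ 2 h ((ρ:ℂ) * Complex.exp ((θ:ℂ) * Complex.I))) :
    HasDerivAt (fun θ : ℝ => fderiv ℝ h ((ρ:ℂ) * Complex.exp ((θ:ℂ) * Complex.I))
        (Complex.I * ((ρ:ℂ) * Complex.exp ((θ:ℂ) * Complex.I))))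
      (fderiv ℝ (fderiv ℝ h) ((ρ:ℂ) * Complex.exp ((θ:ℂ) * Complex.I))
          (Complex.I * ((ρ:ℂ) * Complex.exp ((θ:ℂ) * Complex.I)))
          (Complex.I * ((ρ:ℂ) * Complex.exp ((θ:ℂ) * Complex.I))) +
        fderiv ℝ h ((ρ:ℂ) * Complex.exp ((θ:ℂ) * Complex.I))
          (Complex.I * (Complex.I * ((ρ:ℂ) * Complex.exp ((θ:ℂ) * Complex.I))))) θ := by
  have hc : HasDerivAt (fun θ : ℝ => fderiv ℝ h ((ρ:ℂ) * Complex.exp ((θ:ℂ) * Complex.I)))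
      (fderiv ℝ (fderiv ℝ h) ((ρ:ℂ) * Complex.exp ((θ:ℂ) * Complex.I))
        (Complex.I * ((ρ:ℂ) * Complex.exp ((θ:ℂ) * Complex.I)))) θ :=
    (hfd2 hh).comp_hasDerivAt θ (circle0 ρ θ)
  exact hc.clm_apply ((circle0 ρ θ).const_mul Complex.I)

lemma DUI {F F' : ℝ → ℝ → ℝ} {a₁ b₁ t Mb : ℝ} (ht : t ∈ Set.Ioo a₁ b₁)
    (hcont : ∀ s ∈ Set.Ioo a₁ b₁, Continuous (fun θ => F s θ))
    (hcont' : ∀ s ∈ Set.Ioo a₁ b₁, Continuous (fun θ => F' s θ))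
    (hbound : ∀ s ∈ Set.Ioo a₁ b₁, ∀ θ ∈ Set.Icc 0 (2*Real.pi), |F' s θ| ≤ Mb)
    (hderiv : ∀ s ∈ Set.Ioo a₁ b₁, ∀ θ : ℝ, HasDerivAt (fun u => F u θ) (F' s θ) s) :
    HasDerivAt (fun s => ∫ θ in (0:ℝ)..(2*Real.pi), F s θ)
      (∫ θ in (0:ℝ)..(2*Real.pi), F' t θ) t := by
  obtain ⟨ht1, ht2⟩ := ht
  set ε := min (t - a₁) (b₁ - t) with hε_def
  have hε : 0 < ε := lt_min (by linarith) (by linarith)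
  have hball : Metric.ball t ε ⊆ Set.Ioo a₁ b₁ := by
    intro x hx
    rw [Metric.mem_ball, Real.dist_eq, abs_lt] at hx
    constructor
    · have := hx.1; have := min_le_left (t - a₁) (b₁ - t); simp only [← hε_def] at *; linarith
    · have := hx.2; have := min_le_right (t - a₁) (b₁ - t); simp only [← hε_def] at *; linarith
  have hIoc : Set.uIoc (0:ℝ) (2*Real.pi) ⊆ Set.Icc 0 (2*Real.pi) := by
    rw [Set.uIoc_of_le (by positivity)]
    exact Set.Ioc_subset_Icc_self
  exact (intervalIntegral.hasDerivAt_integral_of_dominated_loc_of_deriv_le (Metric.ball_mem_nhds t hε)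
    (Filter.eventually_of_mem (Ioo_mem_nhds ht1 ht2)
      (fun x hx => (hcont x hx).aestronglyMeasurable))
    ((hcont t ⟨ht1, ht2⟩).intervalIntegrable _ _)
    ((hcont' t ⟨ht1, ht2⟩).aestronglyMeasurable)
    (Filter.Eventually.of_forall (fun θ hθ x hx => by
      rw [Real.norm_eq_abs]
      exact hbound x (hball hx) θ (hIoc hθ)))
    intervalIntegrable_const
    (Filter.Eventually.of_forall (fun θ hθ x hx => hderiv x (hball hx) θ))).2

lemma master_alg {ρ : ℝ} (hρ : ρ ≠ 0) {a u v m1 m2 : ℂ} (hm : m1 + m2 = 0) :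
    (2 * B u u + 2 * B a m1) + (1/ρ) * (2 * B a u)
      + (1/ρ^2) * (2 * B (ρ • v) (ρ • v) + 2 * B a ((ρ^2) • m2 + (-ρ) • u))
    = 2 * (Complex.normSq u + Complex.normSq v) := by
  have hm2 : m2 = -m1 := by linear_combination hm
  rw [B_smul_both, B_add_right, B_smul_right, B_smul_right, hm2, B_neg_right,
    normSq_eq_B, normSq_eq_B]
  field_simp
  ring

lemma solve_div {r a b c d : ℝ} (hr : r ≠ 0) (h : r^2*a + r*b + c = 2*r^2*d) :
    a = 2*d - (1/r)*b - (1/r^2)*c := by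
  have h2 : a = (2*r^2*d - r*b - c)/r^2 := by
    rw [eq_div_iff (pow_ne_zero 2 hr)]
    linear_combination h
  rw [h2]
  field_simp

end S9


set_option maxHeartbeats 1000000 in
/-- Lemma 5.1: two integral identities for `L^λ[U]`. -/
theorem stmt9 (R : ℝ) (hR : 1 < R) (h : ℂ → ℂ) (hH : HarmOn h (ann 1 R))
    (l : ℝ) (hl : l ∈ Set.Ioc (-1 : ℝ) 1) (ρ : ℝ) (hρ : ρ ∈ Set.Ioo 1 R) :
    Lop l (qMean h) ρ =
      2 * ((2 * Real.pi)⁻¹ * ∫ θ in (0:ℝ)..(2 * Real.pi),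
        (Dn2 h ((ρ : ℂ) * Complex.exp ((θ : ℂ) * Complex.I)) -
          (1 / ρ) * deriv (fun t : ℝ => ((t ^ 2 - l) / (t ^ 2 + l)) *
            ‖h ((t : ℂ) * Complex.exp ((θ : ℂ) * Complex.I))‖ ^ 2) ρ)) ∧
    Lop l (qMean h) ρ =
      (2 / ρ ^ 2) * ((2 * Real.pi)⁻¹ * ∫ θ in (0:ℝ)..(2 * Real.pi),
        (‖fderiv ℝ h ((ρ : ℂ) * Complex.exp ((θ : ℂ) * Complex.I))
            (Complex.I * ((ρ : ℂ) * Complex.exp ((θ : ℂ) * Complex.I)))‖ ^ 2 -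
          ‖h ((ρ : ℂ) * Complex.exp ((θ : ℂ) * Complex.I))‖ ^ 2 +
          (ρ ^ 2 + l) ^ 2 * ‖deriv (fun t : ℝ =>
            (((t / (t ^ 2 + l) : ℝ)) : ℂ) *
              h ((t : ℂ) * Complex.exp ((θ : ℂ) * Complex.I))) ρ‖ ^ 2)) := by
  obtain ⟨hρ1, hρR⟩ := hρ
  obtain ⟨hl1, hl2⟩ := hl
  have hρ0 : (0:ℝ) < ρ := lt_trans one_pos hρ1
  have hρne : ρ ≠ 0 := ne_of_gt hρ0
  have hplρ : ρ^2 + l ≠ 0 := by nlinarith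
  have hπ : (2*Real.pi) ≠ 0 := by positivity
  have hA : IsOpen (ann 1 R) := by
    have hset : ann 1 R = (fun z : ℂ => ‖z‖) ⁻¹' (Set.Ioo 1 R) := rfl
    rw [hset]; exact isOpen_Ioo.preimage continuous_norm
  have habs : ∀ (t θ : ℝ), 0 < t → ‖(((t):ℂ) * Complex.exp (((θ):ℂ) * Complex.I))‖ = t := by
    intro t θ ht
    rw [norm_mul, Complex.norm_exp_ofReal_mul_I, Complex.norm_real, Real.norm_eq_abs, abs_of_pos ht, mul_one]
  have hmem : ∀ (t θ : ℝ), t ∈ Set.Ioo 1 R → (((t):ℂ) * Complex.exp (((θ):ℂ) * Complex.I)) ∈ ann 1 R := by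
    intro t θ ht
    have h0 : (0:ℝ) < t := lt_trans one_pos ht.1
    exact ⟨by rw [habs t θ h0]; exact ht.1, by rw [habs t θ h0]; exact ht.2⟩
  have hCD : ∀ {t θ : ℝ}, t ∈ Set.Ioo 1 R → ContDiffAt ℝ 2 h (((t):ℂ) * Complex.exp (((θ):ℂ) * Complex.I)) := by
    intro t θ ht
    exact hH.1.contDiffAt (hA.mem_nhds (hmem t θ ht))
  have hρIoo : ρ ∈ Set.Ioo 1 R := ⟨hρ1, hρR⟩
  set F0 : ℝ → ℝ → ℝ := fun (t θ : ℝ) => Complex.normSq (h (((t):ℂ) * Complex.exp (((θ):ℂ) * Complex.I))) with hF0def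
  set F1 : ℝ → ℝ → ℝ := fun (t θ : ℝ) => 2 * S9.B (h (((t):ℂ) * Complex.exp (((θ):ℂ) * Complex.I))) (fderiv ℝ h (((t):ℂ) * Complex.exp (((θ):ℂ) * Complex.I)) (Complex.exp (((θ):ℂ) * Complex.I))) with hF1def
  set F2 : ℝ → ℝ → ℝ := fun (t θ : ℝ) => 2 * S9.B (fderiv ℝ h (((t):ℂ) * Complex.exp (((θ):ℂ) * Complex.I)) (Complex.exp (((θ):ℂ) * Complex.I))) (fderiv ℝ h (((t):ℂ) * Complex.exp (((θ):ℂ) * Complex.I)) (Complex.exp (((θ):ℂ) * Complex.I))) + 2 * S9.B (h (((t):ℂ) * Complex.exp (((θ):ℂ) * Complex.I))) (fderiv ℝ (fderiv ℝ h) (((t):ℂ) * Complex.exp (((θ):ℂ) * Complex.I)) (Complex.exp (((θ):ℂ) * Complex.I)) (Complex.exp (((θ):ℂ) * Complex.I))) with hF2def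
  set K1 : ℝ → ℝ := fun (θ : ℝ) => 2 * S9.B (h (((ρ):ℂ) * Complex.exp (((θ):ℂ) * Complex.I))) (fderiv ℝ h (((ρ):ℂ) * Complex.exp (((θ):ℂ) * Complex.I)) (Complex.I * (((ρ):ℂ) * Complex.exp (((θ):ℂ) * Complex.I)))) with hK1def
  set K2 : ℝ → ℝ := fun (θ : ℝ) => 2 * S9.B (fderiv ℝ h (((ρ):ℂ) * Complex.exp (((θ):ℂ) * Complex.I)) (Complex.I * (((ρ):ℂ) * Complex.exp (((θ):ℂ) * Complex.I)))) (fderiv ℝ h (((ρ):ℂ) * Complex.exp (((θ):ℂ) * Complex.I)) (Complex.I * (((ρ):ℂ) * Complex.exp (((θ):ℂ) * Complex.I)))) + 2 * S9.B (h (((ρ):ℂ) * Complex.exp (((θ):ℂ) * Complex.I))) (fderiv ℝ (fderiv ℝ h) (((ρ):ℂ) * Complex.exp (((θ):ℂ) * Complex.I)) (Complex.I * (((ρ):ℂ) * Complex.exp (((θ):ℂ) * Complex.I))) (Complex.I * (((ρ):ℂ) * Complex.exp (((θ):ℂ) * Complex.I))) + fderiv ℝ h (((ρ):ℂ) * Complex.exp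 (((θ):ℂ) * Complex.I)) (Complex.I * (Complex.I * (((ρ):ℂ) * Complex.exp (((θ):ℂ) * Complex.I))))) with hK2def
  set DD : ℝ → ℝ := fun (θ : ℝ) => Complex.normSq (fderiv ℝ h (((ρ):ℂ) * Complex.exp (((θ):ℂ) * Complex.I)) (1)) + Complex.normSq (fderiv ℝ h (((ρ):ℂ) * Complex.exp (((θ):ℂ) * Complex.I)) (Complex.I)) with hDDdef
  -- pointwise radial derivatives
  have hD0 : ∀ t ∈ Set.Ioo 1 R, ∀ θ : ℝ, HasDerivAt (fun s => F0 s θ) (F1 t θ) t := by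
    intro t ht θ
    have hh := hCD (θ := θ) ht
    have h1 := S9.hasDerivAt_B (S9.radial1 hh) (S9.radial1 hh)
    have hfun : (fun s : ℝ => F0 s θ)
        = (fun s : ℝ => S9.B (h (((s):ℂ) * Complex.exp (((θ):ℂ) * Complex.I))) (h (((s):ℂ) * Complex.exp (((θ):ℂ) * Complex.I)))) := by
      funext s
      simp only [hF0def]
      exact S9.normSq_eq_B _
    rw [hfun]
    simp only [hF1def]
    convert h1 using 1
    rw [S9.B_comm (h (((t):ℂ) * Complex.exp (((θ):ℂ) * Complex.I))) (fderiv ℝ h (((t):ℂ) * Complex.exp (((θ):ℂ) * Complex.I)) (Complex.exp (((θ):ℂ) * Complex.I)))]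
    ring
  have hD1 : ∀ t ∈ Set.Ioo 1 R, ∀ θ : ℝ, HasDerivAt (fun s => F1 s θ) (F2 t θ) t := by
    intro t ht θ
    have hh := hCD (θ := θ) ht
    have h1 := (S9.hasDerivAt_B (S9.radial1 hh) (S9.radial2 hh)).const_mul 2
    have hfun : (fun s : ℝ => F1 s θ)
        = (fun s : ℝ => 2 * S9.B (h (((s):ℂ) * Complex.exp (((θ):ℂ) * Complex.I))) (fderiv ℝ h (((s):ℂ) * Complex.exp (((θ):ℂ) * Complex.I)) (Complex.exp (((θ):ℂ) * Complex.I)))) := by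
      funext s
      simp only [hF1def]
    rw [hfun]
    simp only [hF2def]
    exact h1.congr_deriv (by ring)
  -- continuity infrastructure
  have hmc : Continuous (fun p : ℝ × ℝ => (((p.1):ℂ) * Complex.exp (((p.2):ℂ) * Complex.I))) :=
    (Complex.continuous_ofReal.comp continuous_fst).mul
      (Complex.continuous_exp.comp ((Complex.continuous_ofReal.comp continuous_snd).mul
        continuous_const))
  have hEc : Continuous (fun p : ℝ × ℝ => Complex.exp (((p.2):ℂ) * Complex.I)) :=
    Complex.continuous_exp.comp ((Complex.continuous_ofReal.comp continuous_snd).mul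
      continuous_const)
  have hmS : Set.MapsTo (fun p : ℝ × ℝ => (((p.1):ℂ) * Complex.exp (((p.2):ℂ) * Complex.I)))
      (Set.Ioo 1 R ×ˢ (Set.univ : Set ℝ)) (ann 1 R) :=
    fun p hp => hmem p.1 p.2 hp.1
  have cH : ContinuousOn (fun p : ℝ × ℝ => h (((p.1):ℂ) * Complex.exp (((p.2):ℂ) * Complex.I)))
      (Set.Ioo 1 R ×ˢ (Set.univ : Set ℝ)) :=
    hH.1.continuousOn.comp hmc.continuousOn hmS
  have cL : ContinuousOn (fun p : ℝ × ℝ => fderiv ℝ h (((p.1):ℂ) * Complex.exp (((p.2):ℂ) * Complex.I)))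
      (Set.Ioo 1 R ×ˢ (Set.univ : Set ℝ)) :=
    (hH.1.continuousOn_fderiv_of_isOpen hA (by norm_num)).comp hmc.continuousOn hmS
  have cM : ContinuousOn (fun p : ℝ × ℝ => fderiv ℝ (fderiv ℝ h) (((p.1):ℂ) * Complex.exp (((p.2):ℂ) * Complex.I)))
      (Set.Ioo 1 R ×ˢ (Set.univ : Set ℝ)) :=
    ((hH.1.fderiv_of_isOpen hA (by norm_num)).continuousOn_fderiv_of_isOpen hA le_rfl).comp
      hmc.continuousOn hmS
  have cB : ∀ {f g : ℝ × ℝ → ℂ}, ContinuousOn f (Set.Ioo 1 R ×ˢ (Set.univ : Set ℝ)) →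
      ContinuousOn g (Set.Ioo 1 R ×ˢ (Set.univ : Set ℝ)) →
      ContinuousOn (fun p => S9.B (f p) (g p)) (Set.Ioo 1 R ×ˢ (Set.univ : Set ℝ)) := by
    intro f g hf hg
    simp only [S9.B_eq]
    exact ((Complex.continuous_re.comp_continuousOn hf).mul
        (Complex.continuous_re.comp_continuousOn hg)).add
      ((Complex.continuous_im.comp_continuousOn hf).mul
        (Complex.continuous_im.comp_continuousOn hg))
  have cIZ : Continuous (fun p : ℝ × ℝ => Complex.I * (((p.1):ℂ) * Complex.exp (((p.2):ℂ) * Complex.I))) :=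
    continuous_const.mul hmc
  have cIIZ : Continuous (fun p : ℝ × ℝ => Complex.I * (Complex.I * (((p.1):ℂ) * Complex.exp (((p.2):ℂ) * Complex.I)))) :=
    continuous_const.mul cIZ
  have cF0 : ContinuousOn (fun p : ℝ × ℝ => F0 p.1 p.2)
      (Set.Ioo 1 R ×ˢ (Set.univ : Set ℝ)) := by
    simp only [hF0def]
    exact Complex.continuous_normSq.comp_continuousOn cH
  have cF1 : ContinuousOn (fun p : ℝ × ℝ => F1 p.1 p.2)
      (Set.Ioo 1 R ×ˢ (Set.univ : Set ℝ)) := by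
    simp only [hF1def]
    exact continuousOn_const.mul (cB cH (cL.clm_apply hEc.continuousOn))
  have cF2 : ContinuousOn (fun p : ℝ × ℝ => F2 p.1 p.2)
      (Set.Ioo 1 R ×ˢ (Set.univ : Set ℝ)) := by
    simp only [hF2def]
    exact (continuousOn_const.mul
        (cB (cL.clm_apply hEc.continuousOn) (cL.clm_apply hEc.continuousOn))).add
      (continuousOn_const.mul
        (cB cH ((cM.clm_apply hEc.continuousOn).clm_apply hEc.continuousOn)))
  have cK2 : ContinuousOn (fun (p : ℝ × ℝ) => 2 * S9.B (fderiv ℝ h (((p.1):ℂ) * Complex.exp (((p.2):ℂ) * Complex.I)) (Complex.I * (((p.1):ℂ) * Complex.exp (((p.2):ℂ) * Complex.I)))) (fderiv ℝ h (((p.1):ℂ) * Complex.exp (((p.2):ℂ) * Complex.I)) (Complex.I * (((p.1):ℂ) * Complex.exp (((p.2):ℂ) * Complex.I)))) + 2 * S9.B (h (((p.1):ℂ) * Complex.exp (((p.2):ℂ) * Complex.I))) (fderiv ℝ (fderiv ℝ h) (((p.1):ℂ) * Complex.exp (((p.2):ℂ) * Complex.I)) (Complex.I * (((p.1):ℂ)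 * Complex.exp (((p.2):ℂ) * Complex.I))) (Complex.I * (((p.1):ℂ) * Complex.exp (((p.2):ℂ) * Complex.I))) + fderiv ℝ h (((p.1):ℂ) * Complex.exp (((p.2):ℂ) * Complex.I)) (Complex.I * (Complex.I * (((p.1):ℂ) * Complex.exp (((p.2):ℂ) * Complex.I)))))) (Set.Ioo 1 R ×ˢ (Set.univ : Set ℝ)) :=
    (continuousOn_const.mul
        (cB (cL.clm_apply cIZ.continuousOn) (cL.clm_apply cIZ.continuousOn))).add
      (continuousOn_const.mul (cB cH
        (((cM.clm_apply cIZ.continuousOn).clm_apply cIZ.continuousOn).add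
          (cL.clm_apply cIIZ.continuousOn))))
  have cDD : ContinuousOn (fun (p : ℝ × ℝ) => Complex.normSq (fderiv ℝ h (((p.1):ℂ) * Complex.exp (((p.2):ℂ) * Complex.I)) (1)) + Complex.normSq (fderiv ℝ h (((p.1):ℂ) * Complex.exp (((p.2):ℂ) * Complex.I)) (Complex.I))) (Set.Ioo 1 R ×ˢ (Set.univ : Set ℝ)) :=
    (Complex.continuous_normSq.comp_continuousOn (cL.clm_apply continuousOn_const)).add
      (Complex.continuous_normSq.comp_continuousOn (cL.clm_apply continuousOn_const))
  have slice : ∀ {G : ℝ × ℝ → ℝ}, ContinuousOn G (Set.Ioo 1 R ×ˢ (Set.univ : Set ℝ)) →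
      ∀ {t : ℝ}, t ∈ Set.Ioo 1 R → Continuous (fun θ => G (t, θ)) := by
    intro G hG t ht
    rw [← continuousOn_univ]
    exact hG.comp (continuous_const.prodMk continuous_id).continuousOn
      (fun θ _ => ⟨ht, trivial⟩)
  -- bounds on a compact slab
  have ha1 : (1:ℝ) < (1+ρ)/2 := by linarith
  have ha2 : (1+ρ)/2 < ρ := by linarith
  have hb1 : ρ < (ρ+R)/2 := by linarith
  have hb2 : (ρ+R)/2 < R := by linarith
  have hsub : Set.Ioo ((1+ρ)/2) ((ρ+R)/2) ⊆ Set.Ioo 1 R := by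
    intro x hx; exact ⟨lt_trans ha1 hx.1, lt_trans hx.2 hb2⟩
  have hKsub : (Set.Icc ((1+ρ)/2) ((ρ+R)/2) ×ˢ Set.Icc (0:ℝ) (2*Real.pi)) ⊆
      (Set.Ioo 1 R ×ˢ (Set.univ : Set ℝ)) := by
    intro p hp
    exact ⟨⟨lt_of_lt_of_le ha1 hp.1.1, lt_of_le_of_lt hp.1.2 hb2⟩, trivial⟩
  have hKcomp : IsCompact (Set.Icc ((1+ρ)/2) ((ρ+R)/2) ×ˢ Set.Icc (0:ℝ) (2*Real.pi)) :=
    isCompact_Icc.prod isCompact_Icc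
  obtain ⟨M1, hM1⟩ := hKcomp.exists_bound_of_continuousOn (cF1.mono hKsub)
  obtain ⟨M2, hM2⟩ := hKcomp.exists_bound_of_continuousOn (cF2.mono hKsub)
  have hρmid : ρ ∈ Set.Ioo ((1+ρ)/2) ((ρ+R)/2) := ⟨ha2, hb1⟩
  -- differentiate under the integral sign, twice
  have HQ1 : ∀ t ∈ Set.Ioo ((1+ρ)/2) ((ρ+R)/2),
      HasDerivAt (fun s => ∫ θ in (0:ℝ)..(2*Real.pi), F0 s θ) (∫ θ in (0:ℝ)..(2*Real.pi), F1 t θ) t := by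
    intro t ht
    refine S9.DUI (Mb := M1) ht (fun s hs => slice cF0 (hsub hs))
      (fun s hs => slice cF1 (hsub hs))
      (fun s hs θ hθ => ?_) (fun s hs θ => hD0 s (hsub hs) θ)
    have := hM1 (s, θ) ⟨⟨le_of_lt hs.1, le_of_lt hs.2⟩, hθ⟩
    rwa [Real.norm_eq_abs] at this
  have HQ2 : HasDerivAt (fun s => ∫ θ in (0:ℝ)..(2*Real.pi), F1 s θ) (∫ θ in (0:ℝ)..(2*Real.pi), F2 ρ θ) ρ := by
    refine S9.DUI (Mb := M2) hρmid (fun s hs => slice cF1 (hsub hs))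
      (fun s hs => slice cF2 (hsub hs))
      (fun s hs θ hθ => ?_) (fun s hs θ => hD1 s (hsub hs) θ)
    have := hM2 (s, θ) ⟨⟨le_of_lt hs.1, le_of_lt hs.2⟩, hθ⟩
    rwa [Real.norm_eq_abs] at this
  have hqMean : qMean h = fun t => (2*Real.pi)⁻¹ * ∫ θ in (0:ℝ)..(2*Real.pi), F0 t θ := by
    funext t
    simp only [qMean, hF0def]
    congr 1
    exact intervalIntegral.integral_congr (fun θ _ => Complex.sq_norm _)
  have hU1 : ∀ t ∈ Set.Ioo ((1+ρ)/2) ((ρ+R)/2),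
      HasDerivAt (qMean h) ((2*Real.pi)⁻¹ * ∫ θ in (0:ℝ)..(2*Real.pi), F1 t θ) t := by
    intro t ht
    rw [hqMean]
    exact (HQ1 t ht).const_mul _
  have hderivU : deriv (qMean h) ρ = (2*Real.pi)⁻¹ * ∫ θ in (0:ℝ)..(2*Real.pi), F1 ρ θ :=
    (hU1 ρ hρmid).deriv
  have hEvq : deriv (qMean h) =ᶠ[nhds ρ] (fun t => (2*Real.pi)⁻¹ * ∫ θ in (0:ℝ)..(2*Real.pi), F1 t θ) := by
    filter_upwards [Ioo_mem_nhds ha2 hb1] with t ht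
    exact (hU1 t ht).deriv
  have hU2 : deriv (deriv (qMean h)) ρ = (2*Real.pi)⁻¹ * ∫ θ in (0:ℝ)..(2*Real.pi), F2 ρ θ := by
    rw [hEvq.deriv_eq]
    exact (HQ2.const_mul _).deriv
  -- integrability of slices at radius ρ
  have iF0 : IntervalIntegrable (fun θ => F0 ρ θ) MeasureTheory.volume 0 (2*Real.pi) :=
    (slice cF0 hρIoo).intervalIntegrable _ _
  have iF1 : IntervalIntegrable (fun θ => F1 ρ θ) MeasureTheory.volume 0 (2*Real.pi) :=
    (slice cF1 hρIoo).intervalIntegrable _ _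
  have iK2 : IntervalIntegrable K2 MeasureTheory.volume 0 (2*Real.pi) :=
    (slice cK2 hρIoo).intervalIntegrable _ _
  have iDD : IntervalIntegrable DD MeasureTheory.volume 0 (2*Real.pi) :=
    (slice cDD hρIoo).intervalIntegrable _ _
  -- the angular derivative
  have hK12 : ∀ θ : ℝ, HasDerivAt K1 (K2 θ) θ := by
    intro θ
    have hh := hCD (θ := θ) hρIoo
    have h1 := (S9.hasDerivAt_B (S9.ang1 hh) (S9.ang2 hh)).const_mul 2
    have h2 : K2 θ = 2 * (S9.B (fderiv ℝ h (((ρ):ℂ) * Complex.exp (((θ):ℂ) * Complex.I)) (Complex.I * (((ρ):ℂ) * Complex.exp (((θ):ℂ) * Complex.I)))) (fderiv ℝ h (((ρ):ℂ) * Complex.exp (((θ):ℂ) * Complex.I)) (Complex.I * (((ρ):ℂ) * Complex.exp (((θ):ℂ) * Complex.I))))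
        + S9.B (h (((ρ):ℂ) * Complex.exp (((θ):ℂ) * Complex.I))) (fderiv ℝ (fderiv ℝ h) (((ρ):ℂ) * Complex.exp (((θ):ℂ) * Complex.I)) (Complex.I * (((ρ):ℂ) * Complex.exp (((θ):ℂ) * Complex.I))) (Complex.I * (((ρ):ℂ) * Complex.exp (((θ):ℂ) * Complex.I)))
          + fderiv ℝ h (((ρ):ℂ) * Complex.exp (((θ):ℂ) * Complex.I)) (Complex.I * (Complex.I * (((ρ):ℂ) * Complex.exp (((θ):ℂ) * Complex.I)))))) := by
      simp only [hK2def]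
      ring
    rw [h2]
    simp only [hK1def]
    exact h1
  have hexp2π : Complex.exp ((((2*Real.pi : ℝ)):ℂ) * Complex.I)
      = Complex.exp ((((0:ℝ)):ℂ) * Complex.I) := by
    push_cast
    rw [Complex.exp_two_pi_mul_I]
    simp
  have hKint : (∫ θ in (0:ℝ)..(2*Real.pi), K2 θ) = 0 := by
    rw [intervalIntegral.integral_eq_sub_of_hasDerivAt (fun θ _ => hK12 θ) iK2]
    simp only [hK1def]
    rw [hexp2π]
    ring
  -- pointwise master identity
  have hMast : ∀ θ : ℝ, ρ^2 * F2 ρ θ + ρ * F1 ρ θ + K2 θ = 2 * ρ^2 * DD θ := by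
    intro θ
    have hh := hCD (θ := θ) hρIoo
    have hIIz : Complex.I * (Complex.I * (((ρ):ℂ) * Complex.exp (((θ):ℂ) * Complex.I))) = (-ρ) • (Complex.exp (((θ):ℂ) * Complex.I)) := by
      rw [Complex.real_smul]
      push_cast
      rw [show Complex.I * (Complex.I * (((ρ):ℂ) * Complex.exp (((θ):ℂ) * Complex.I)))
        = (Complex.I * Complex.I) * (((ρ):ℂ) * Complex.exp (((θ):ℂ) * Complex.I)) by ring, Complex.I_mul_I]
      ring
    have hIz : Complex.I * (((ρ):ℂ) * Complex.exp (((θ):ℂ) * Complex.I)) = ρ • (Complex.I * Complex.exp (((θ):ℂ) * Complex.I)) := by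
      rw [Complex.real_smul]; ring
    have hm : fderiv ℝ (fderiv ℝ h) (((ρ):ℂ) * Complex.exp (((θ):ℂ) * Complex.I)) (Complex.exp (((θ):ℂ) * Complex.I)) (Complex.exp (((θ):ℂ) * Complex.I)) + fderiv ℝ (fderiv ℝ h) (((ρ):ℂ) * Complex.exp (((θ):ℂ) * Complex.I)) (Complex.I * Complex.exp (((θ):ℂ) * Complex.I)) (Complex.I * Complex.exp (((θ):ℂ) * Complex.I)) = 0 := by
      rw [S9.rot2 (fderiv ℝ (fderiv ℝ h) (((ρ):ℂ) * Complex.exp (((θ):ℂ) * Complex.I))) θ, ← S9.lap_eq_f2 hh]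
      exact hH.2 _ (hmem ρ θ hρIoo)
    have hBam2 : S9.B (h (((ρ):ℂ) * Complex.exp (((θ):ℂ) * Complex.I))) (fderiv ℝ (fderiv ℝ h) (((ρ):ℂ) * Complex.exp (((θ):ℂ) * Complex.I)) (Complex.I * Complex.exp (((θ):ℂ) * Complex.I)) (Complex.I * Complex.exp (((θ):ℂ) * Complex.I)))
        = - S9.B (h (((ρ):ℂ) * Complex.exp (((θ):ℂ) * Complex.I))) (fderiv ℝ (fderiv ℝ h) (((ρ):ℂ) * Complex.exp (((θ):ℂ) * Complex.I)) (Complex.exp (((θ):ℂ) * Complex.I)) (Complex.exp (((θ):ℂ) * Complex.I))) := by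
      have h0 : fderiv ℝ (fderiv ℝ h) (((ρ):ℂ) * Complex.exp (((θ):ℂ) * Complex.I)) (Complex.I * Complex.exp (((θ):ℂ) * Complex.I)) (Complex.I * Complex.exp (((θ):ℂ) * Complex.I)) = -(fderiv ℝ (fderiv ℝ h) (((ρ):ℂ) * Complex.exp (((θ):ℂ) * Complex.I)) (Complex.exp (((θ):ℂ) * Complex.I)) (Complex.exp (((θ):ℂ) * Complex.I))) := by
        linear_combination hm
      rw [h0, S9.B_neg_right]
    simp only [hF1def, hF2def, hK2def, hDDdef]
    rw [hIIz, hIz]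
    simp only [_root_.map_smul, ContinuousLinearMap.smul_apply, S9.B_add_right, S9.B_smul_right,
      S9.B_smul_left]
    rw [← S9.rot (fderiv ℝ h (((ρ):ℂ) * Complex.exp (((θ):ℂ) * Complex.I))) θ]
    simp only [S9.normSq_eq_B]
    rw [hBam2]
    ring
  -- integral form of the master identity
  have hIntF2 : (∫ θ in (0:ℝ)..(2*Real.pi), F2 ρ θ) = 2 * (∫ θ in (0:ℝ)..(2*Real.pi), DD θ) - (1/ρ) * (∫ θ in (0:ℝ)..(2*Real.pi), F1 ρ θ) := by
    have e1 : ∀ θ : ℝ, F2 ρ θ = 2 * DD θ - (1/ρ) * F1 ρ θ - (1/ρ^2) * K2 θ :=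
      fun θ => S9.solve_div hρne (hMast θ)
    rw [intervalIntegral.integral_congr
      (g := fun θ => 2 * DD θ - (1/ρ) * F1 ρ θ - (1/ρ^2) * K2 θ) (fun θ _ => e1 θ)]
    rw [intervalIntegral.integral_sub ((iDD.const_mul 2).sub (iF1.const_mul (1/ρ)))
      (iK2.const_mul (1/ρ^2))]
    rw [intervalIntegral.integral_sub (iDD.const_mul 2) (iF1.const_mul (1/ρ))]
    rw [intervalIntegral.integral_const_mul 2 DD,
      intervalIntegral.integral_const_mul (1/ρ) (fun θ => F1 ρ θ),
      intervalIntegral.integral_const_mul (1/ρ^2) K2, hKint]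
    ring
  have hqv : qMean h ρ = (2*Real.pi)⁻¹ * ∫ θ in (0:ℝ)..(2*Real.pi), F0 ρ θ := by rw [hqMean]
  -- derivatives of the auxiliary rational functions
  have hpow : HasDerivAt (fun t : ℝ => t^2 + l) (2*ρ) ρ := by
    have h0 := (hasDerivAt_pow 2 ρ).add_const l
    exact h0.congr_deriv (by norm_num)
  have hpow2 : HasDerivAt (fun t : ℝ => t^2 - l) (2*ρ) ρ := by
    have h0 := (hasDerivAt_pow 2 ρ).sub_const l
    exact h0.congr_deriv (by norm_num)
  have hφ : HasDerivAt (fun t : ℝ => (t^2 - l)/(t^2 + l)) ((2*ρ*(ρ^2+l) - (ρ^2-l)*(2*ρ))/(ρ^2+l)^2) ρ := hpow2.div hpow hplρ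
  have hψ : HasDerivAt (fun t : ℝ => t/(t^2 + l)) ((1*(ρ^2+l) - ρ*(2*ρ))/(ρ^2+l)^2) ρ := (hasDerivAt_id ρ).div hpow hplρ
  have hψC : HasDerivAt (fun t : ℝ => ((t/(t^2 + l) : ℝ) : ℂ)) ((((1*(ρ^2+l) - ρ*(2*ρ))/(ρ^2+l)^2) : ℝ) : ℂ) ρ :=
    hψ.ofReal_comp
  -- part (a) pointwise
  have ea : ∀ θ : ℝ,
      (Dn2 h (((ρ):ℂ) * Complex.exp (((θ):ℂ) * Complex.I)) - (1 / ρ) * deriv (fun t : ℝ => ((t ^ 2 - l) / (t ^ 2 + l)) *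
        ‖h (((t):ℂ) * Complex.exp (((θ):ℂ) * Complex.I))‖ ^ 2) ρ)
      = DD θ - (1/ρ) * (((2*ρ*(ρ^2+l) - (ρ^2-l)*(2*ρ))/(ρ^2+l)^2) * F0 ρ θ + ((ρ^2-l)/(ρ^2+l)) * F1 ρ θ) := by
    intro θ
    have hprod := hφ.mul (hD0 ρ hρIoo θ)
    have hd : deriv (fun t : ℝ => ((t ^ 2 - l) / (t ^ 2 + l)) *
        ‖h (((t):ℂ) * Complex.exp (((θ):ℂ) * Complex.I))‖ ^ 2) ρ
        = ((2*ρ*(ρ^2+l) - (ρ^2-l)*(2*ρ))/(ρ^2+l)^2) * F0 ρ θ + ((ρ^2-l)/(ρ^2+l)) * F1 ρ θ := by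
      have hfeq : (fun t : ℝ => ((t ^ 2 - l) / (t ^ 2 + l)) *
          ‖h (((t):ℂ) * Complex.exp (((θ):ℂ) * Complex.I))‖ ^ 2)
          = (fun t : ℝ => ((t ^ 2 - l) / (t ^ 2 + l)) * F0 t θ) := by
        funext t
        simp only [hF0def]
        rw [Complex.sq_norm]
      rw [hfeq]
      exact hprod.deriv
    have hDn : Dn2 h (((ρ):ℂ) * Complex.exp (((θ):ℂ) * Complex.I)) = DD θ := by
      simp only [Dn2, hDDdef, Complex.sq_norm]
    rw [hd, hDn]
  -- part (b) pointwise
  have eb : ∀ θ : ℝ,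
      (‖fderiv ℝ h (((ρ):ℂ) * Complex.exp (((θ):ℂ) * Complex.I)) (Complex.I * (((ρ):ℂ) * Complex.exp (((θ):ℂ) * Complex.I)))‖ ^ 2 -
        ‖h (((ρ):ℂ) * Complex.exp (((θ):ℂ) * Complex.I))‖ ^ 2 +
        (ρ ^ 2 + l) ^ 2 * ‖deriv (fun t : ℝ =>
          (((t / (t ^ 2 + l) : ℝ)) : ℂ) * h (((t):ℂ) * Complex.exp (((θ):ℂ) * Complex.I))) ρ‖ ^ 2)
      = ρ^2 * DD θ + ((ρ^2+l)^2 * ((1*(ρ^2+l) - ρ*(2*ρ))/(ρ^2+l)^2)^2 - 1) * F0 ρ θ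
        + ((ρ^2+l)^2 * ((1*(ρ^2+l) - ρ*(2*ρ))/(ρ^2+l)^2) * (ρ/(ρ^2+l))) * F1 ρ θ := by
    intro θ
    have hh := hCD (θ := θ) hρIoo
    have hprod : HasDerivAt (fun t : ℝ => (((t / (t ^ 2 + l) : ℝ)) : ℂ) * h (((t):ℂ) * Complex.exp (((θ):ℂ) * Complex.I)))
        (((((1*(ρ^2+l) - ρ*(2*ρ))/(ρ^2+l)^2) : ℝ) : ℂ) * h (((ρ):ℂ) * Complex.exp (((θ):ℂ) * Complex.I)) + (((ρ/(ρ^2+l)) : ℝ) : ℂ) * (fderiv ℝ h (((ρ):ℂ) * Complex.exp (((θ):ℂ) * Complex.I)) (Complex.exp (((θ):ℂ) * Complex.I)))) ρ :=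
      hψC.mul (S9.radial1 hh)
    have hd : deriv (fun t : ℝ => (((t / (t ^ 2 + l) : ℝ)) : ℂ) * h (((t):ℂ) * Complex.exp (((θ):ℂ) * Complex.I))) ρ
        = ((((1*(ρ^2+l) - ρ*(2*ρ))/(ρ^2+l)^2) : ℝ) : ℂ) * h (((ρ):ℂ) * Complex.exp (((θ):ℂ) * Complex.I)) + (((ρ/(ρ^2+l)) : ℝ) : ℂ) * (fderiv ℝ h (((ρ):ℂ) * Complex.exp (((θ):ℂ) * Complex.I)) (Complex.exp (((θ):ℂ) * Complex.I))) :=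
      hprod.deriv
    have hIz : Complex.I * (((ρ):ℂ) * Complex.exp (((θ):ℂ) * Complex.I)) = ρ • (Complex.I * Complex.exp (((θ):ℂ) * Complex.I)) := by
      rw [Complex.real_smul]; ring
    have hns : Complex.normSq (ρ • fderiv ℝ h (((ρ):ℂ) * Complex.exp (((θ):ℂ) * Complex.I)) (Complex.I * Complex.exp (((θ):ℂ) * Complex.I)))
        = ρ^2 * Complex.normSq (fderiv ℝ h (((ρ):ℂ) * Complex.exp (((θ):ℂ) * Complex.I)) (Complex.I * Complex.exp (((θ):ℂ) * Complex.I))) := by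
      rw [Complex.real_smul, Complex.normSq_mul, Complex.normSq_ofReal]
      ring
    have hn2 : Complex.normSq (fderiv ℝ h (((ρ):ℂ) * Complex.exp (((θ):ℂ) * Complex.I)) (Complex.I * Complex.exp (((θ):ℂ) * Complex.I)))
        = Complex.normSq (fderiv ℝ h (((ρ):ℂ) * Complex.exp (((θ):ℂ) * Complex.I)) (1)) + Complex.normSq (fderiv ℝ h (((ρ):ℂ) * Complex.exp (((θ):ℂ) * Complex.I)) (Complex.I))
          - Complex.normSq (fderiv ℝ h (((ρ):ℂ) * Complex.exp (((θ):ℂ) * Complex.I)) (Complex.exp (((θ):ℂ) * Complex.I))) := by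
      have h0 := S9.rot (fderiv ℝ h (((ρ):ℂ) * Complex.exp (((θ):ℂ) * Complex.I))) θ
      linarith [h0]
    rw [hd, hIz, (fderiv ℝ h (((ρ):ℂ) * Complex.exp (((θ):ℂ) * Complex.I))).map_smul]
    simp only [Complex.sq_norm]
    rw [hns, S9.normSq_combo, hn2]
    simp only [hF0def, hF1def, hDDdef]
    field_simp
    ring
  -- final assembly
  constructor
  · unfold Lop
    rw [hU2, hIntF2, hderivU, hqv]
    rw [intervalIntegral.integral_congr (g := fun θ : ℝ =>
        DD θ - (1/ρ) * (((2*ρ*(ρ^2+l) - (ρ^2-l)*(2*ρ))/(ρ^2+l)^2) * F0 ρ θ + ((ρ^2-l)/(ρ^2+l)) * F1 ρ θ)) (fun θ _ => ea θ)]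
    rw [intervalIntegral.integral_sub iDD
      (((iF0.const_mul ((2*ρ*(ρ^2+l) - (ρ^2-l)*(2*ρ))/(ρ^2+l)^2)).add (iF1.const_mul ((ρ^2-l)/(ρ^2+l)))).const_mul (1/ρ))]
    rw [intervalIntegral.integral_const_mul (1/ρ)
      (fun θ => ((2*ρ*(ρ^2+l) - (ρ^2-l)*(2*ρ))/(ρ^2+l)^2) * F0 ρ θ + ((ρ^2-l)/(ρ^2+l)) * F1 ρ θ)]
    rw [intervalIntegral.integral_add (iF0.const_mul ((2*ρ*(ρ^2+l) - (ρ^2-l)*(2*ρ))/(ρ^2+l)^2)) (iF1.const_mul ((ρ^2-l)/(ρ^2+l)))]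
    rw [intervalIntegral.integral_const_mul ((2*ρ*(ρ^2+l) - (ρ^2-l)*(2*ρ))/(ρ^2+l)^2) (fun θ => F0 ρ θ),
      intervalIntegral.integral_const_mul ((ρ^2-l)/(ρ^2+l)) (fun θ => F1 ρ θ)]
    generalize (∫ θ in (0:ℝ)..(2*Real.pi), DD θ) = XD
    generalize (∫ θ in (0:ℝ)..(2*Real.pi), F0 ρ θ) = X0
    generalize (∫ θ in (0:ℝ)..(2*Real.pi), F1 ρ θ) = X1
    field_simp
    ring
  · unfold Lop
    rw [hU2, hIntF2, hderivU, hqv]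
    rw [intervalIntegral.integral_congr (g := fun θ : ℝ =>
        ρ^2 * DD θ + ((ρ^2+l)^2 * ((1*(ρ^2+l) - ρ*(2*ρ))/(ρ^2+l)^2)^2 - 1) * F0 ρ θ
          + ((ρ^2+l)^2 * ((1*(ρ^2+l) - ρ*(2*ρ))/(ρ^2+l)^2) * (ρ/(ρ^2+l))) * F1 ρ θ) (fun θ _ => eb θ)]
    rw [intervalIntegral.integral_add ((iDD.const_mul (ρ^2)).add
        (iF0.const_mul ((ρ^2+l)^2 * ((1*(ρ^2+l) - ρ*(2*ρ))/(ρ^2+l)^2)^2 - 1)))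
      (iF1.const_mul ((ρ^2+l)^2 * ((1*(ρ^2+l) - ρ*(2*ρ))/(ρ^2+l)^2) * (ρ/(ρ^2+l))))]
    rw [intervalIntegral.integral_add (iDD.const_mul (ρ^2))
      (iF0.const_mul ((ρ^2+l)^2 * ((1*(ρ^2+l) - ρ*(2*ρ))/(ρ^2+l)^2)^2 - 1))]
    rw [intervalIntegral.integral_const_mul (ρ^2) DD,
      intervalIntegral.integral_const_mul ((ρ^2+l)^2 * ((1*(ρ^2+l) - ρ*(2*ρ))/(ρ^2+l)^2)^2 - 1) (fun θ => F0 ρ θ),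
      intervalIntegral.integral_const_mul ((ρ^2+l)^2 * ((1*(ρ^2+l) - ρ*(2*ρ))/(ρ^2+l)^2) * (ρ/(ρ^2+l))) (fun θ => F1 ρ θ)]
    generalize (∫ θ in (0:ℝ)..(2*Real.pi), DD θ) = XD
    generalize (∫ θ in (0:ℝ)..(2*Real.pi), F0 ρ θ) = X0
    generalize (∫ θ in (0:ℝ)..(2*Real.pi), F1 ρ θ) = X1
    field_simp
    ring

end
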